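/- Let B be a graph in 𝓑_1 with root vertex v_1 (of degree 1 in B), let w_2 be a vertex of degree 2 in B different from v_1, and let T be the graph obtained from B by adding a new vertex v_2 together with the two edges v_1 v_2 and v_2 w_2. Then there exists an independent dominating set of T of minimum cardinality i(T) that contains the vertex v_2. -/

import Mathlib

namespace PaperIndepDom

open SimpleGraph

/-- The degree of a vertex `v` in a graph `G`. -/
noncomputable def deg {V : Type*} (G : SimpleGraph V) (v : V) : ℕ :=
  (G.neighborSet v).ncard

/-- A set `S` is an independent dominating set of `G`. -/
def IsIDSet {V : Type*} (G : SimpleGraph V) (S : Set V) : Prop :=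
  (∀ u ∈ S, ∀ v ∈ S, ¬ G.Adj u v) ∧ ∀ v, v ∉ S → ∃ u ∈ S, G.Adj u v

/-- The independent domination number `i(G)`. -/
noncomputable def iNum {V : Type*} (G : SimpleGraph V) : ℕ :=
  sInf {n | ∃ S : Set V, IsIDSet G S ∧ S.ncard = n}

/-- The base graph `B₁`: a copy of `K_{2,3}` (vertices `0, 1` forming the partite set of
size 2, vertices `2, 3, 4` forming the partite set of size 3) together with a new root
vertex `5` joined to the degree-2 vertex `2`. -/
def baseGraph : SimpleGraph (Fin 6) :=
  SimpleGraph.fromRel (fun i j =>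
    (i.val ≤ 1 ∧ 2 ≤ j.val ∧ j.val ≤ 4) ∨ (i = 2 ∧ j = 5))

/-- The graph obtained from `G` by adding a vertex-disjoint copy of `K_{2,3}`
(on the vertex set `Fin 2 ⊕ Fin 3`) together with an edge joining the vertex `v'` of `G`
to the degree-2 vertex `Sum.inr t` of the added copy of `K_{2,3}` (operation `O₁`). -/
def addK23 {V : Type*} (G : SimpleGraph V) (v' : V) (t : Fin 3) :
    SimpleGraph (V ⊕ (Fin 2 ⊕ Fin 3)) :=
  SimpleGraph.fromRel (fun x y =>
    (∃ a b, G.Adj a b ∧ x = Sum.inl a ∧ y = Sum.inl b) ∨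
    (∃ i j, x = Sum.inr (Sum.inl i) ∧ y = Sum.inr (Sum.inr j)) ∨
    (x = Sum.inl v' ∧ y = Sum.inr (Sum.inr t)))

/-- `FamilyBRoot G r` means that `G` belongs to the family `𝓑` (the smallest family of
graphs, closed under isomorphism, containing the base graph and closed under the
operation `O₁`) and `r` is the root of `G`. -/
inductive FamilyBRoot : ∀ {V : Type}, SimpleGraph V → V → Prop
  | base : FamilyBRoot baseGraph 5
  | extend {V : Type} {G : SimpleGraph V} {r : V} (hG : FamilyBRoot G r) (v' : V)
      (hv' : deg G v' ≤ 2) (t : Fin 3) : FamilyBRoot (addK23 G v' t) (Sum.inl r)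
  | iso {V W : Type} {G : SimpleGraph V} {H : SimpleGraph W} {r : V}
      (e : G ≃g H) (hG : FamilyBRoot G r) : FamilyBRoot H (e r)

/-- The graph obtained from `B` by adding a new vertex `v₂` (namely `Sum.inr ()`)
together with the two edges `v₁v₂` and `v₂w₂`. -/
def addLink {V : Type*} (B : SimpleGraph V) (v1 w2 : V) : SimpleGraph (V ⊕ Unit) :=
  SimpleGraph.fromRel (fun x y =>
    (∃ a b, B.Adj a b ∧ x = Sum.inl a ∧ y = Sum.inl b) ∨
    (x = Sum.inl v1 ∧ y = Sum.inr ()) ∨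
    (x = Sum.inl w2 ∧ y = Sum.inr ()))

/-! ### Auxiliary notions -/

open Sum Set

/-- Independence of a set of vertices. -/
def Indep {V : Type*} (G : SimpleGraph V) (J : Set V) : Prop :=
  ∀ u ∈ J, ∀ v ∈ J, ¬ G.Adj u v

/-- `J` dominates every vertex outside `S`. -/
def DomExcept {V : Type*} (G : SimpleGraph V) (S J : Set V) : Prop :=
  ∀ z, z ∉ S → z ∉ J → ∃ u ∈ J, G.Adj u z

instance : DecidableRel baseGraph.Adj := fun a b =>
  decidable_of_iff _ (SimpleGraph.fromRel_adj _ a b).symm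

lemma deg_eq_degree {V : Type*} [Fintype V] (G : SimpleGraph V) [DecidableRel G.Adj]
    (v : V) : deg G v = G.degree v :=
  Set.ncard_eq_toFinset_card' _

/-! ### Counting helpers -/

lemma ncard_split {V W : Type*} [Finite V] [Finite W] (A : Set (V ⊕ W)) :
    A.ncard = (Sum.inl ⁻¹' A).ncard + (Sum.inr ⁻¹' A).ncard := by
  have hdis : Disjoint (Sum.inl '' (Sum.inl ⁻¹' A)) (Sum.inr '' (Sum.inr ⁻¹' A)) := by
    rw [Set.disjoint_left]
    rintro x ⟨a, _, rfl⟩ ⟨b, _, h⟩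
    exact Sum.inl_ne_inr h.symm
  have hA : A = Sum.inl '' (Sum.inl ⁻¹' A) ∪ Sum.inr '' (Sum.inr ⁻¹' A) := by
    ext x
    cases x with
    | inl a => simp
    | inr b => simp
  calc A.ncard = (Sum.inl '' (Sum.inl ⁻¹' A) ∪ Sum.inr '' (Sum.inr ⁻¹' A)).ncard := by
        rw [← hA]
    _ = (Sum.inl '' (Sum.inl ⁻¹' A)).ncard + (Sum.inr '' (Sum.inr ⁻¹' A)).ncard :=
        Set.ncard_union_eq hdis (Set.toFinite _) (Set.toFinite _)
    _ = (Sum.inl ⁻¹' A).ncard + (Sum.inr ⁻¹' A).ncard := by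
        rw [Set.ncard_image_of_injective _ Sum.inl_injective,
          Set.ncard_image_of_injective _ Sum.inr_injective]

lemma ncard_cover {α : Type*} [Finite α] (Q J : Set α) :
    Q.ncard ≤ (Q ∩ J).ncard + (Q \ J).ncard := by
  rw [← Set.ncard_union_eq (Set.disjoint_of_subset_left Set.inter_subset_right
      disjoint_sdiff_right) (Set.toFinite _) (Set.toFinite _)]
  exact Set.ncard_le_ncard
    (by intro x hx; by_cases h : x ∈ J; exacts [Or.inl ⟨hx, h⟩, Or.inr ⟨hx, h⟩])
    (Set.toFinite _)

/-! ### Adjacency in `addK23` -/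

section adjK23
variable {V : Type*} {G : SimpleGraph V} {v' : V} {t : Fin 3}

lemma addK23_adj_inl_inl {a b : V} :
    (addK23 G v' t).Adj (inl a) (inl b) ↔ G.Adj a b := by
  simp only [addK23, fromRel_adj, ne_eq, inl.injEq]
  constructor
  · rintro ⟨hne, h | h⟩
    · rcases h with (⟨x, y, hxy, hx, hy⟩ | ⟨i, j, h, _⟩ | ⟨_, h⟩) <;> first
        | (cases hx; cases hy; exact hxy)
        | simp_all
    · rcases h with (⟨x, y, hxy, hx, hy⟩ | ⟨i, j, h, _⟩ | ⟨_, h⟩) <;> first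
        | (cases hx; cases hy; exact hxy.symm)
        | simp_all
  · intro h
    exact ⟨fun he => G.loopless.irrefl b (he ▸ h), Or.inl (Or.inl ⟨a, b, h, rfl, rfl⟩)⟩

lemma addK23_adj_inl_inr {a : V} {z : Fin 2 ⊕ Fin 3} :
    (addK23 G v' t).Adj (inl a) (inr z) ↔ a = v' ∧ z = inr t := by
  simp only [addK23, fromRel_adj, ne_eq]
  constructor
  · rintro ⟨_, h | h⟩ <;>
    · rcases h with (⟨x, y, hxy, hx, hy⟩ | ⟨i, j, h1, h2⟩ | ⟨h1, h2⟩) <;> simp_all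
  · rintro ⟨rfl, rfl⟩
    exact ⟨by simp, Or.inl (Or.inr (Or.inr ⟨rfl, rfl⟩))⟩

lemma addK23_adj_inr_inl {a : V} {z : Fin 2 ⊕ Fin 3} :
    (addK23 G v' t).Adj (inr z) (inl a) ↔ a = v' ∧ z = inr t := by
  rw [SimpleGraph.adj_comm]; exact addK23_adj_inl_inr

lemma addK23_adj_inr_inr {z z' : Fin 2 ⊕ Fin 3} :
    (addK23 G v' t).Adj (inr z) (inr z') ↔
      ((∃ i j, z = inl i ∧ z' = inr j) ∨ (∃ i j, z' = inl i ∧ z = inr j)) := by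
  simp only [addK23, fromRel_adj, ne_eq]
  constructor
  · rintro ⟨hne, h | h⟩
    · rcases h with (⟨x, y, hxy, hx, hy⟩ | ⟨i, j, h1, h2⟩ | ⟨h1, h2⟩)
      · exact absurd hx (by simp)
      · obtain rfl : z = inl i := by injection h1
        obtain rfl : z' = inr j := by injection h2
        exact Or.inl ⟨i, j, rfl, rfl⟩
      · exact absurd h1 (by simp)
    · rcases h with (⟨x, y, hxy, hx, hy⟩ | ⟨i, j, h1, h2⟩ | ⟨h1, h2⟩)
      · exact absurd hx (by simp)
      · obtain rfl : z' = inl i := by injection h1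
        obtain rfl : z = inr j := by injection h2
        exact Or.inr ⟨i, j, rfl, rfl⟩
      · exact absurd h1 (by simp)
  · rintro (⟨i, j, rfl, rfl⟩ | ⟨i, j, rfl, rfl⟩)
    · exact ⟨by simp, Or.inl (Or.inr (Or.inl ⟨i, j, rfl, rfl⟩))⟩
    · exact ⟨by simp, Or.inr (Or.inr (Or.inl ⟨i, j, rfl, rfl⟩))⟩

lemma addK23_adj_P_Y {i : Fin 2} {j : Fin 3} :
    (addK23 G v' t).Adj (inr (inl i)) (inr (inr j)) :=
  addK23_adj_inr_inr.mpr (Or.inl ⟨i, j, rfl, rfl⟩)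

end adjK23

/-! ### Adjacency in `addLink` -/

section adjLink
variable {V : Type*} {B : SimpleGraph V} {v1 w2 : V}

lemma addLink_adj_inl_inl {a b : V} :
    (addLink B v1 w2).Adj (inl a) (inl b) ↔ B.Adj a b := by
  simp only [addLink, fromRel_adj, ne_eq, inl.injEq]
  constructor
  · rintro ⟨hne, h | h⟩
    · rcases h with (⟨x, y, hxy, hx, hy⟩ | ⟨_, h⟩ | ⟨_, h⟩) <;> first
        | (cases hx; cases hy; exact hxy)
        | simp_all
    · rcases h with (⟨x, y, hxy, hx, hy⟩ | ⟨_, h⟩ | ⟨_, h⟩) <;> first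
        | (cases hx; cases hy; exact hxy.symm)
        | simp_all
  · intro h
    exact ⟨fun he => B.loopless.irrefl b (he ▸ h), Or.inl (Or.inl ⟨a, b, h, rfl, rfl⟩)⟩

lemma addLink_adj_inl_inr {a : V} {u : Unit} :
    (addLink B v1 w2).Adj (inl a) (inr u) ↔ (a = v1 ∨ a = w2) := by
  simp only [addLink, fromRel_adj, ne_eq]
  constructor
  · rintro ⟨_, h | h⟩ <;>
    · rcases h with (⟨x, y, hxy, hx, hy⟩ | ⟨h1, h2⟩ | ⟨h1, h2⟩) <;> simp_all
  · cases u
    rintro (rfl | rfl)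
    · exact ⟨by simp, Or.inl (Or.inr (Or.inl ⟨rfl, trivial⟩))⟩
    · exact ⟨by simp, Or.inl (Or.inr (Or.inr ⟨rfl, trivial⟩))⟩

lemma addLink_adj_inr_inl {a : V} {u : Unit} :
    (addLink B v1 w2).Adj (inr u) (inl a) ↔ (a = v1 ∨ a = w2) := by
  rw [SimpleGraph.adj_comm]; exact addLink_adj_inl_inr

end adjLink



/-! ### Degrees in `addK23` -/

section degK23
variable {V : Type*} [Finite V] {G : SimpleGraph V} {v' : V} {t : Fin 3}

lemma addK23_nbr_inl_subset (a : V) :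
    Sum.inl '' G.neighborSet a ⊆ (addK23 G v' t).neighborSet (inl a) := by
  rintro x ⟨b, hb, rfl⟩
  exact addK23_adj_inl_inl.mpr hb

lemma deg_addK23_inl_ge (a : V) : deg G a ≤ deg (addK23 G v' t) (inl a) := by
  have h := Set.ncard_le_ncard (addK23_nbr_inl_subset (G := G) (v' := v') (t := t) a)
    (Set.toFinite _)
  rwa [Set.ncard_image_of_injective _ Sum.inl_injective] at h

lemma addK23_nbr_inl_v' :
    (addK23 G v' t).neighborSet (inl v') =
      insert (inr (inr t) : V ⊕ (Fin 2 ⊕ Fin 3)) (Sum.inl '' G.neighborSet v') := by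
  ext x
  cases x with
  | inl b =>
    simp only [mem_neighborSet, addK23_adj_inl_inl, Set.mem_insert_iff, Set.mem_image]
    constructor
    · intro h; exact Or.inr ⟨b, h, rfl⟩
    · rintro (h | ⟨c, hc, hcb⟩)
      · exact absurd h (by simp)
      · cases hcb; exact hc
  | inr z =>
    simp only [mem_neighborSet, addK23_adj_inl_inr, Set.mem_insert_iff, Set.mem_image]
    constructor
    · rintro ⟨-, rfl⟩; exact Or.inl rfl
    · rintro (h | ⟨c, hc, hcb⟩)
      · injection h with h; exact ⟨by simp, h⟩
      · exact absurd hcb (by simp)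

lemma deg_addK23_inl_v' :
    deg (addK23 G v' t) (inl v') = deg G v' + 1 := by
  rw [deg, addK23_nbr_inl_v', Set.ncard_insert_of_notMem (by simp) (Set.toFinite _),
    Set.ncard_image_of_injective _ Sum.inl_injective]
  rfl

lemma addK23_nbr_P (i : Fin 2) :
    (addK23 G v' t).neighborSet (inr (inl i)) =
      {inr (inr 0), inr (inr 1), inr (inr 2)} := by
  have h3 : ∀ j : Fin 3, j = 0 ∨ j = 1 ∨ j = 2 := by decide
  ext x
  cases x with
  | inl b =>
    simp only [mem_neighborSet, addK23_adj_inr_inl]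
    simp
  | inr z =>
    simp only [mem_neighborSet, addK23_adj_inr_inr]
    cases z with
    | inl i' => simp
    | inr j =>
      simp only [Set.mem_insert_iff, Set.mem_singleton_iff, inr.injEq]
      constructor
      · intro _; exact h3 j
      · intro _; exact Or.inl ⟨i, j, rfl, rfl⟩

lemma deg_addK23_P (i : Fin 2) : deg (addK23 G v' t) (inr (inl i)) = 3 := by
  rw [deg, addK23_nbr_P]
  rw [Set.ncard_insert_of_notMem (by simp) (Set.toFinite _),
    Set.ncard_insert_of_notMem (by simp) (Set.toFinite _), Set.ncard_singleton]

lemma addK23_nbr_Yt :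
    (addK23 G v' t).neighborSet (inr (inr t)) =
      {inl v', inr (inl 0), inr (inl 1)} := by
  have h2 : ∀ i : Fin 2, i = 0 ∨ i = 1 := by decide
  ext x
  cases x with
  | inl b =>
    simp only [mem_neighborSet, addK23_adj_inr_inl, Set.mem_insert_iff,
      Set.mem_singleton_iff]
    constructor
    · rintro ⟨rfl, -⟩; exact Or.inl rfl
    · rintro (h | h | h)
      · injection h with h; exact ⟨h, by simp⟩
      · exact absurd h (by simp)
      · exact absurd h (by simp)
  | inr z =>
    simp only [mem_neighborSet, addK23_adj_inr_inr, Set.mem_insert_iff,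
      Set.mem_singleton_iff]
    cases z with
    | inl i =>
      simp only [inr.injEq, inl.injEq]
      constructor
      · intro _
        rcases h2 i with h | h
        · exact Or.inr (Or.inl (by rw [h]))
        · exact Or.inr (Or.inr (by rw [h]))
      · intro _; exact Or.inr ⟨i, t, rfl, rfl⟩
    | inr j =>
      constructor
      · rintro (⟨i, j', h, -⟩ | ⟨i, j', h, h2'⟩)
        · exact absurd h (by simp)
        · exact absurd h (by simp)
      · rintro (h | h | h) <;> exact absurd h (by simp)

lemma deg_addK23_Yt : deg (addK23 G v' t) (inr (inr t)) = 3 := by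
  rw [deg, addK23_nbr_Yt]
  rw [Set.ncard_insert_of_notMem (by simp) (Set.toFinite _),
    Set.ncard_insert_of_notMem (by simp) (Set.toFinite _), Set.ncard_singleton]

lemma deg_addK23_Y_ge (j : Fin 3) : 2 ≤ deg (addK23 G v' t) (inr (inr j)) := by
  have hsub : ({inr (inl 0), inr (inl 1)} : Set (V ⊕ (Fin 2 ⊕ Fin 3))) ⊆
      (addK23 G v' t).neighborSet (inr (inr j)) := by
    rintro x (rfl | rfl)
    · exact addK23_adj_inr_inr.mpr (Or.inr ⟨0, j, rfl, rfl⟩)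
    · exact addK23_adj_inr_inr.mpr (Or.inr ⟨1, j, rfl, rfl⟩)
  have h := Set.ncard_le_ncard hsub (Set.toFinite _)
  rwa [Set.ncard_pair (by simp)] at h

end degK23

/-! ### The invariant -/

structure GoodAt {V : Type} (G : SimpleGraph V) (r : V) (k : ℕ) : Prop where
  fin : Finite V
  dr : 1 ≤ deg G r
  degs : ∀ v, v ≠ r → 2 ≤ deg G v
  lb : ∀ S J : Set V, (∀ v ∈ S, deg G v ≤ 2) → Indep G J → (∀ v ∈ J, v ∉ S) →
        DomExcept G S J → 2 * k + 1 ≤ J.ncard + S.ncard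
  ub : deg G r = 1 → ∀ v, v ≠ r → deg G v ≤ 2 →
        ∃ J : Set V, Indep G J ∧ r ∉ J ∧ v ∉ J ∧ DomExcept G {r, v} J ∧ J.ncard ≤ 2 * k

/-! ### Base case -/

lemma base_degs : ∀ v : Fin 6, (deg baseGraph v ≤ 2 ↔ (v = 3 ∨ v = 4 ∨ v = 5)) ∧
    (v ≠ 5 → 2 ≤ deg baseGraph v) ∧ (deg baseGraph 5 = 1) := by
  intro v
  simp only [deg_eq_degree]
  revert v; decide

set_option maxRecDepth 10000 in
set_option synthInstance.maxHeartbeats 200000 in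
set_option synthInstance.maxSize 1024 in
lemma base_lb_finset : ∀ (J S : Finset (Fin 6)),
    (∀ v ∈ S, v = 3 ∨ v = 4 ∨ v = 5) →
    (∀ u ∈ J, ∀ v ∈ J, ¬ baseGraph.Adj u v) →
    (∀ v ∈ J, v ∉ S) →
    (∀ v : Fin 6, v ∉ S → v ∉ J → ∃ u ∈ J, baseGraph.Adj u v) →
    3 ≤ J.card + S.card := by decide

lemma goodAt_base : GoodAt baseGraph 5 1 := by
  constructor
  · infer_instance
  · rw [(base_degs 5).2.2]
  · intro v hv
    exact (base_degs v).2.1 hv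
  · -- lower bound
    intro S J hS hI hdis hdom
    have hJfin : J.Finite := Set.toFinite _
    have hSfin : S.Finite := Set.toFinite _
    have hJc : J.ncard = hJfin.toFinset.card := by
      rw [← Set.ncard_coe_finset, hJfin.coe_toFinset]
    have hSc : S.ncard = hSfin.toFinset.card := by
      rw [← Set.ncard_coe_finset, hSfin.coe_toFinset]
    rw [hJc, hSc]
    apply base_lb_finset
    · intro v hv
      exact (base_degs v).1.mp (hS v (hSfin.mem_toFinset.mp hv))
    · intro u hu v hv
      exact hI u (hJfin.mem_toFinset.mp hu) v (hJfin.mem_toFinset.mp hv)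
    · intro v hv
      rw [hSfin.mem_toFinset]
      exact hdis v (hJfin.mem_toFinset.mp hv)
    · intro v hvS hvJ
      obtain ⟨u, hu, hadj⟩ := hdom v (fun h => hvS (hSfin.mem_toFinset.mpr h))
        (fun h => hvJ (hJfin.mem_toFinset.mpr h))
      exact ⟨u, hJfin.mem_toFinset.mpr hu, hadj⟩
  · -- upper bound
    intro _ v hv5 hvdeg
    have hv34 : v = 3 ∨ v = 4 := by
      rcases (base_degs v).1.mp hvdeg with h | h | h
      · exact Or.inl h
      · exact Or.inr h
      · exact absurd h hv5
    have key : ∀ w : Fin 6, (w = 3 ∨ w = 4) →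
        ∃ J : Set (Fin 6), Indep baseGraph J ∧ (5 : Fin 6) ∉ J ∧ w ∉ J ∧
          DomExcept baseGraph {5, w} J ∧ J.ncard ≤ 2 * 1 := by
      intro w hw
      rcases hw with rfl | rfl
      · refine ⟨{2, 4}, ?_, by simp, by simp, ?_, ?_⟩
        · intro u hu v' hv'
          simp only [Set.mem_insert_iff, Set.mem_singleton_iff] at hu hv'
          rcases hu with rfl | rfl <;> rcases hv' with rfl | rfl <;> decide
        · intro z hz1 hz2
          simp only [Set.mem_insert_iff, Set.mem_singleton_iff] at hz1 hz2
          have : ∀ z : Fin 6, ¬(z = 5 ∨ z = 3) → ¬(z = 2 ∨ z = 4) →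
              ∃ u, (u = 2 ∨ u = 4) ∧ baseGraph.Adj u z := by decide
          obtain ⟨u, hu, hadj⟩ := this z hz1 hz2
          refine ⟨u, ?_, hadj⟩
          simp only [Set.mem_insert_iff, Set.mem_singleton_iff]
          exact hu
        · rw [Set.ncard_pair (by decide)]
      · refine ⟨{2, 3}, ?_, by simp, by simp, ?_, ?_⟩
        · intro u hu v' hv'
          simp only [Set.mem_insert_iff, Set.mem_singleton_iff] at hu hv'
          rcases hu with rfl | rfl <;> rcases hv' with rfl | rfl <;> decide
        · intro z hz1 hz2
          simp only [Set.mem_insert_iff, Set.mem_singleton_iff] at hz1 hz2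
          have : ∀ z : Fin 6, ¬(z = 5 ∨ z = 4) → ¬(z = 2 ∨ z = 3) →
              ∃ u, (u = 2 ∨ u = 3) ∧ baseGraph.Adj u z := by decide
          obtain ⟨u, hu, hadj⟩ := this z hz1 hz2
          refine ⟨u, ?_, hadj⟩
          simp only [Set.mem_insert_iff, Set.mem_singleton_iff]
          exact hu
        · rw [Set.ncard_pair (by decide)]
    exact key v hv34

/-! ### Extension case -/

lemma fin3_cases : ∀ t j : Fin 3, j = t ∨ j = t + 1 ∨ j = t + 2 := by decide
lemma fin3_ne1 : ∀ t : Fin 3, t + 1 ≠ t := by decide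
lemma fin3_ne2 : ∀ t : Fin 3, t + 2 ≠ t := by decide
lemma fin3_ne12 : ∀ t : Fin 3, t + 1 ≠ t + 2 := by decide
lemma fin2_cases : ∀ i : Fin 2, i = 0 ∨ i = 1 := by decide
lemma fin3_exists_other : ∀ t j : Fin 3, j ≠ t → ∃ c : Fin 3, c ≠ t ∧ c ≠ j := by decide
lemma fin3_all : ∀ t j c j' : Fin 3, j ≠ t → c ≠ t → c ≠ j →
    (j' = t ∨ j' = j ∨ j' = c) := by decide

lemma goodAt_extend {V : Type} {G : SimpleGraph V} {r v' : V} {t : Fin 3} {k : ℕ}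
    (hG : GoodAt G r k) (hv' : deg G v' ≤ 2) :
    GoodAt (addK23 G v' t) (Sum.inl r) (k + 1) := by
  haveI := hG.fin
  set B' := addK23 G v' t with hB'
  constructor
  · infer_instance
  · exact le_trans hG.dr (deg_addK23_inl_ge r)
  · -- degrees
    intro v hvne
    cases v with
    | inl a =>
      have har : a ≠ r := fun h => hvne (by rw [h])
      exact le_trans (hG.degs a har) (deg_addK23_inl_ge a)
    | inr z =>
      cases z with
      | inl i => rw [deg_addK23_P]; omega
      | inr j => exact deg_addK23_Y_ge j
  · -- lower bound
    intro S J hS hI hdis hdom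
    set S0 : Set V := Sum.inl ⁻¹' S with hS0def
    set S1 : Set (Fin 2 ⊕ Fin 3) := Sum.inr ⁻¹' S with hS1def
    set J0 : Set V := Sum.inl ⁻¹' J with hJ0def
    set J1 : Set (Fin 2 ⊕ Fin 3) := Sum.inr ⁻¹' J with hJ1def
    have hsplitS : S.ncard = S0.ncard + S1.ncard := ncard_split S
    have hsplitJ : J.ncard = J0.ncard + J1.ncard := ncard_split J
    have hS0deg : ∀ v ∈ S0, deg G v ≤ 2 :=
      fun v hv => le_trans (deg_addK23_inl_ge v) (hS _ hv)
    have hI0 : Indep G J0 :=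
      fun u hu v hv hadj => hI _ hu _ hv (addK23_adj_inl_inl.mpr hadj)
    have hdis0 : ∀ v ∈ J0, v ∉ S0 := fun v hv hvS => hdis _ hv hvS
    have hPS : ∀ i : Fin 2, Sum.inr (Sum.inl i) ∉ S := by
      intro i h
      have := hS _ h
      rw [deg_addK23_P] at this
      omega
    have hYtS : Sum.inr (Sum.inr t) ∉ S := by
      intro h
      have := hS _ h
      rw [deg_addK23_Yt] at this
      omega
    by_cases hP : ∃ i : Fin 2, Sum.inr (Sum.inl i) ∈ J
    · -- Case A: a vertex of the 2-side is in J
      obtain ⟨i, hPi⟩ := hP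
      have hYJ : ∀ j : Fin 3, Sum.inr (Sum.inr j) ∉ J :=
        fun j hj => hI _ hPi _ hj addK23_adj_P_Y
      have hPall : ∀ i' : Fin 2, Sum.inr (Sum.inl i') ∈ J := by
        intro i'
        by_contra h
        obtain ⟨u, huJ, hadj⟩ := hdom _ (hPS i') h
        cases u with
        | inl a =>
          have := (addK23_adj_inl_inr.mp hadj).2
          exact absurd this (by simp)
        | inr z =>
          rcases addK23_adj_inr_inr.mp hadj with ⟨a, b, h1, h2⟩ | ⟨a, b, h1, h2⟩
          · exact absurd h2 (by simp)
          · subst h2; exact hYJ b huJ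
      have hJ1 : J1 = {Sum.inl 0, Sum.inl 1} := by
        ext z
        constructor
        · intro hz
          cases z with
          | inl i' =>
            rcases fin2_cases i' with rfl | rfl
            · exact Set.mem_insert _ _
            · exact Set.mem_insert_of_mem _ rfl
          | inr j => exact absurd hz (hYJ j)
        · rintro (rfl | rfl)
          · exact hPall 0
          · exact hPall 1
      have hJ1card : J1.ncard = 2 := by
        rw [hJ1]; exact Set.ncard_pair (by decide)
      have hdom0 : DomExcept G S0 J0 := by
        intro z hz1 hz2
        obtain ⟨u, huJ, hadj⟩ := hdom (Sum.inl z) hz1 hz2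
        cases u with
        | inl b => exact ⟨b, huJ, addK23_adj_inl_inl.mp hadj⟩
        | inr w =>
          obtain ⟨-, rfl⟩ := addK23_adj_inr_inl.mp hadj
          exact absurd huJ (hYJ t)
      have hIH := hG.lb S0 J0 hS0deg hI0 hdis0 hdom0
      omega
    · -- Case B: no vertex of the 2-side is in J
      push_neg at hP
      have hYJS : ∀ j : Fin 3, j ≠ t →
          (Sum.inr (Sum.inr j) ∈ J ∨ Sum.inr (Sum.inr j) ∈ S) := by
        intro j hjt
        by_contra h
        push_neg at h
        obtain ⟨u, huJ, hadj⟩ := hdom _ h.2 h.1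
        cases u with
        | inl a =>
          have h2 := (addK23_adj_inl_inr.mp hadj).2
          injection h2 with h2
          exact hjt h2
        | inr z =>
          rcases addK23_adj_inr_inr.mp hadj with ⟨a, b, h1, h2⟩ | ⟨a, b, h1, h2⟩
          · cases h1; exact hP a huJ
          · exact absurd h1 (by simp)
      set Q : Set (Fin 2 ⊕ Fin 3) := {Sum.inr (t + 1), Sum.inr (t + 2)} with hQdef
      have hQcard : Q.ncard = 2 :=
        Set.ncard_pair (by simp only [ne_eq, inr.injEq]; exact fin3_ne12 t)
      have hQJS : Q \ J1 ⊆ S1 := by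
        rintro z ⟨hzQ, hzJ⟩
        rcases hzQ with rfl | rfl
        · rcases hYJS (t + 1) (fin3_ne1 t) with h | h
          · exact absurd h hzJ
          · exact h
        · rcases hYJS (t + 2) (fin3_ne2 t) with h | h
          · exact absurd h hzJ
          · exact h
      have hcover : Q.ncard ≤ (Q ∩ J1).ncard + (Q \ J1).ncard := ncard_cover Q J1
      have hS1ge : (Q \ J1).ncard ≤ S1.ncard := Set.ncard_le_ncard hQJS (Set.toFinite _)
      by_cases hYt : Sum.inr (Sum.inr t) ∈ J
      · -- Case B1
        have hv'J : Sum.inl v' ∉ J :=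
          fun h => hI _ h _ hYt (addK23_adj_inl_inr.mpr ⟨rfl, rfl⟩)
        have hJ1eq : J1 = insert (Sum.inr t) (Q ∩ J1) := by
          ext z
          constructor
          · intro hz
            cases z with
            | inl i => exact absurd hz (hP i)
            | inr j =>
              rcases fin3_cases t j with rfl | rfl | rfl
              · exact Set.mem_insert _ _
              · exact Set.mem_insert_of_mem _ ⟨Set.mem_insert _ _, hz⟩
              · exact Set.mem_insert_of_mem _ ⟨Set.mem_insert_of_mem _ rfl, hz⟩
          · rintro (rfl | ⟨-, hz⟩)
            · exact hYt
            · exact hz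
        have hnm : (Sum.inr t : Fin 2 ⊕ Fin 3) ∉ Q ∩ J1 := by
          rintro ⟨hzQ, -⟩
          rcases hzQ with h | h
          · exact fin3_ne1 t (by injection h with h; exact h.symm)
          · exact fin3_ne2 t (by injection h with h; exact h.symm)
        have hJ1card : J1.ncard = (Q ∩ J1).ncard + 1 := by
          conv_lhs => rw [hJ1eq]
          rw [Set.ncard_insert_of_notMem hnm (Set.toFinite _)]
        have hdom0' : DomExcept G (insert v' S0) J0 := by
          intro z hz1 hz2
          have hzv' : z ≠ v' := fun h => hz1 (h ▸ Set.mem_insert _ _)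
          have hzS0 : z ∉ S0 := fun h => hz1 (Set.mem_insert_of_mem _ h)
          obtain ⟨u, huJ, hadj⟩ := hdom (Sum.inl z) hzS0 hz2
          cases u with
          | inl b => exact ⟨b, huJ, addK23_adj_inl_inl.mp hadj⟩
          | inr w =>
            obtain ⟨h1, -⟩ := addK23_adj_inr_inl.mp hadj
            exact absurd h1 hzv'
        have hS0' : ∀ v ∈ insert v' S0, deg G v ≤ 2 := by
          rintro v (rfl | hv)
          · exact hv'
          · exact hS0deg v hv
        have hdis0' : ∀ v ∈ J0, v ∉ insert v' S0 := by
          rintro v hv (rfl | hvS)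
          · exact hv'J hv
          · exact hdis0 v hv hvS
        have hIH := hG.lb (insert v' S0) J0 hS0' hI0 hdis0' hdom0'
        have hins : (insert v' S0).ncard ≤ S0.ncard + 1 := Set.ncard_insert_le _ _
        omega
      · -- Case B2
        have hv'J : Sum.inl v' ∈ J := by
          obtain ⟨u, huJ, hadj⟩ := hdom _ hYtS hYt
          cases u with
          | inl a =>
            obtain ⟨rfl, -⟩ := addK23_adj_inl_inr.mp hadj
            exact huJ
          | inr z =>
            rcases addK23_adj_inr_inr.mp hadj with ⟨a, b, h1, h2⟩ | ⟨a, b, h1, h2⟩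
            · cases h1; exact absurd huJ (hP a)
            · exact absurd h1 (by simp)
        have hJ1eq : J1 = Q ∩ J1 := by
          ext z
          constructor
          · intro hz
            cases z with
            | inl i => exact absurd hz (hP i)
            | inr j =>
              rcases fin3_cases t j with rfl | rfl | rfl
              · exact absurd hz hYt
              · exact ⟨Set.mem_insert _ _, hz⟩
              · exact ⟨Set.mem_insert_of_mem _ rfl, hz⟩
          · rintro ⟨-, hz⟩; exact hz
        have hJ1card : J1.ncard = (Q ∩ J1).ncard := by conv_lhs => rw [hJ1eq]
        have hdom0 : DomExcept G S0 J0 := by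
          intro z hz1 hz2
          obtain ⟨u, huJ, hadj⟩ := hdom (Sum.inl z) hz1 hz2
          cases u with
          | inl b => exact ⟨b, huJ, addK23_adj_inl_inl.mp hadj⟩
          | inr w =>
            obtain ⟨-, rfl⟩ := addK23_adj_inr_inl.mp hadj
            exact absurd huJ hYt
        have hIH := hG.lb S0 J0 hS0deg hI0 hdis0 hdom0
        omega
  · -- upper bound
    intro hdeg v hvne hvdeg
    have hv'r : v' ≠ r := by
      rintro rfl
      rw [deg_addK23_inl_v'] at hdeg
      have := hG.dr
      omega
    have hdegGr : deg G r = 1 :=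
      le_antisymm (hdeg ▸ deg_addK23_inl_ge r) hG.dr
    cases v with
    | inl a =>
      have ha : a ≠ v' := by
        rintro rfl
        rw [deg_addK23_inl_v'] at hvdeg
        have h1 : deg G a ≤ 1 := by omega
        by_cases h : a = r
        · exact hv'r h
        · have := hG.degs a h; omega
      have hadeg : deg G a ≤ 2 := le_trans (deg_addK23_inl_ge a) hvdeg
      have har : a ≠ r := fun h => hvne (by rw [h])
      obtain ⟨J, hIJ, hrJ, haJ, hdomJ, hcard⟩ := hG.ub hdegGr a har hadeg
      refine ⟨Sum.inl '' J ∪ {Sum.inr (Sum.inl 0), Sum.inr (Sum.inl 1)}, ?_, ?_, ?_, ?_, ?_⟩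
      · -- independence
        rintro u (⟨x, hx, rfl⟩ | hu) w (⟨y, hy, rfl⟩ | hw)
        · intro hadj; exact hIJ x hx y hy (addK23_adj_inl_inl.mp hadj)
        · rcases hw with rfl | rfl <;>
          · intro hadj
            exact absurd (addK23_adj_inl_inr.mp hadj).2 (by simp)
        · rcases hu with rfl | rfl <;>
          · intro hadj
            exact absurd (addK23_adj_inr_inl.mp hadj).2 (by simp)
        · rcases hu with rfl | rfl <;> rcases hw with rfl | rfl <;>
          · intro hadj
            rcases addK23_adj_inr_inr.mp hadj with ⟨_, _, h1, h2⟩ | ⟨_, _, h1, h2⟩ <;>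
              simp_all
      · rintro (⟨x, hx, hxe⟩ | h)
        · cases hxe; exact hrJ hx
        · rcases h with h | h <;> exact absurd h (by simp)
      · rintro (⟨x, hx, hxe⟩ | h)
        · cases hxe; exact haJ hx
        · rcases h with h | h <;> exact absurd h (by simp)
      · -- domination
        intro z hz1 hz2
        cases z with
        | inl b =>
          have hb : b ∉ ({r, a} : Set V) := by
            rintro (rfl | rfl)
            · exact hz1 (Set.mem_insert _ _)
            · exact hz1 (Set.mem_insert_of_mem _ rfl)
          have hbJ : b ∉ J := fun h => hz2 (Or.inl ⟨b, h, rfl⟩)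
          obtain ⟨u, hu, hadj⟩ := hdomJ b hb hbJ
          exact ⟨Sum.inl u, Or.inl ⟨u, hu, rfl⟩, addK23_adj_inl_inl.mpr hadj⟩
        | inr z' =>
          cases z' with
          | inl i =>
            exfalso
            apply hz2
            rcases fin2_cases i with rfl | rfl
            · exact Or.inr (Set.mem_insert _ _)
            · exact Or.inr (Set.mem_insert_of_mem _ rfl)
          | inr j =>
            exact ⟨Sum.inr (Sum.inl 0), Or.inr (Set.mem_insert _ _), addK23_adj_P_Y⟩
      · -- cardinality
        have hdisj : Disjoint (Sum.inl '' J)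
            ({Sum.inr (Sum.inl 0), Sum.inr (Sum.inl 1)} : Set (V ⊕ (Fin 2 ⊕ Fin 3))) := by
          rw [Set.disjoint_left]
          rintro x ⟨y, -, rfl⟩ (h | h) <;> exact absurd h (by simp)
        rw [Set.ncard_union_eq hdisj (Set.toFinite _) (Set.toFinite _),
          Set.ncard_image_of_injective _ Sum.inl_injective,
          Set.ncard_pair (fun h => by
            injection h with h1; injection h1 with h2
            exact (by decide : (0 : Fin 2) ≠ 1) h2)]
        omega
    | inr z =>
      cases z with
      | inl i =>
        rw [deg_addK23_P] at hvdeg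
        omega
      | inr j =>
        have hjt : j ≠ t := by
          rintro rfl
          rw [deg_addK23_Yt] at hvdeg
          omega
        obtain ⟨c, hct, hcj⟩ : ∃ c : Fin 3, c ≠ t ∧ c ≠ j := fin3_exists_other t j hjt
        obtain ⟨J, hIJ, hrJ, hv'J, hdomJ, hcard⟩ := hG.ub hdegGr v' hv'r hv'
        refine ⟨Sum.inl '' J ∪ {Sum.inr (Sum.inr t), Sum.inr (Sum.inr c)}, ?_, ?_, ?_, ?_, ?_⟩
        · -- independence
          rintro u (⟨x, hx, rfl⟩ | hu) w (⟨y, hy, rfl⟩ | hw)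
          · intro hadj; exact hIJ x hx y hy (addK23_adj_inl_inl.mp hadj)
          · rcases hw with rfl | rfl
            · intro hadj
              obtain ⟨rfl, -⟩ := addK23_adj_inl_inr.mp hadj
              exact hv'J hx
            · intro hadj
              obtain ⟨-, h2⟩ := addK23_adj_inl_inr.mp hadj
              injection h2 with h2
              exact hct h2
          · rcases hu with rfl | rfl
            · intro hadj
              obtain ⟨rfl, -⟩ := addK23_adj_inr_inl.mp hadj
              exact hv'J hy
            · intro hadj
              obtain ⟨-, h2⟩ := addK23_adj_inr_inl.mp hadj
              injection h2 with h2
              exact hct h2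
          · rcases hu with rfl | rfl <;> rcases hw with rfl | rfl <;>
            · intro hadj
              rcases addK23_adj_inr_inr.mp hadj with ⟨_, _, h1, h2⟩ | ⟨_, _, h1, h2⟩ <;>
                simp_all
        · rintro (⟨x, hx, hxe⟩ | h)
          · cases hxe; exact hrJ hx
          · rcases h with h | h <;> exact absurd h (by simp)
        · rintro (⟨x, hx, hxe⟩ | h)
          · exact absurd hxe (by simp)
          · rcases h with h | h
            · injection h with h; injection h with h; exact hjt h
            · injection h with h; injection h with h; exact hcj h.symm
        · -- domination
          intro z hz1 hz2
          cases z with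
          | inl b =>
            by_cases hbv' : b = v'
            · subst hbv'
              exact ⟨Sum.inr (Sum.inr t), Or.inr (Set.mem_insert _ _),
                addK23_adj_inr_inl.mpr ⟨rfl, rfl⟩⟩
            · have hb : b ∉ ({r, v'} : Set V) := by
                rintro (rfl | rfl)
                · exact hz1 (Set.mem_insert _ _)
                · exact hbv' rfl
              have hbJ : b ∉ J := fun h => hz2 (Or.inl ⟨b, h, rfl⟩)
              obtain ⟨u, hu, hadj⟩ := hdomJ b hb hbJ
              exact ⟨Sum.inl u, Or.inl ⟨u, hu, rfl⟩, addK23_adj_inl_inl.mpr hadj⟩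
          | inr z' =>
            cases z' with
            | inl i =>
              exact ⟨Sum.inr (Sum.inr t), Or.inr (Set.mem_insert _ _),
                addK23_adj_inr_inr.mpr (Or.inr ⟨i, t, rfl, rfl⟩)⟩
            | inr j' =>
              exfalso
              have : j' = t ∨ j' = j ∨ j' = c := fin3_all t j c j' hjt hct hcj
              rcases this with rfl | rfl | rfl
              · exact hz2 (Or.inr (Set.mem_insert _ _))
              · exact hz1 (Set.mem_insert_of_mem _ rfl)
              · exact hz2 (Or.inr (Set.mem_insert_of_mem _ rfl))
        · -- cardinality
          have hdisj : Disjoint (Sum.inl '' J)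
              ({Sum.inr (Sum.inr t), Sum.inr (Sum.inr c)} : Set (V ⊕ (Fin 2 ⊕ Fin 3))) := by
            rw [Set.disjoint_left]
            rintro x ⟨y, -, rfl⟩ (h | h) <;> exact absurd h (by simp)
          rw [Set.ncard_union_eq hdisj (Set.toFinite _) (Set.toFinite _),
            Set.ncard_image_of_injective _ Sum.inl_injective,
            Set.ncard_pair (by simp only [ne_eq, inr.injEq]; exact fun h => hct (h ▸ rfl))]
          omega

/-! ### Isomorphism case -/

lemma goodAt_iso {V W : Type} {G : SimpleGraph V} {H : SimpleGraph W} {r : V} {k : ℕ}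
    (e : G ≃g H) (hG : GoodAt G r k) : GoodAt H (e r) k := by
  haveI := hG.fin
  haveI : Finite W := Finite.of_equiv V e.toEquiv
  have hadj : ∀ x y : V, H.Adj (e x) (e y) ↔ G.Adj x y := fun x y => e.map_adj_iff
  have hdeg : ∀ x : V, deg H (e x) = deg G x := by
    intro x
    have hset : H.neighborSet (e x) = ⇑e '' G.neighborSet x := by
      ext w
      simp only [mem_neighborSet, Set.mem_image]
      constructor
      · intro h
        refine ⟨e.symm w, ?_, e.apply_symm_apply w⟩
        rw [← hadj]
        rwa [e.apply_symm_apply]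
      · rintro ⟨y, hy, rfl⟩
        exact (hadj x y).mpr hy
    rw [deg, deg, hset, Set.ncard_image_of_injective _ (EquivLike.injective e)]
  have hdeg' : ∀ w : W, deg H w = deg G (e.symm w) := by
    intro w
    have := hdeg (e.symm w)
    rwa [RelIso.apply_symm_apply] at this
  constructor
  · infer_instance
  · rw [hdeg]; exact hG.dr
  · intro w hw
    rw [hdeg']
    refine hG.degs _ (fun h => hw ?_)
    rw [← RelIso.apply_symm_apply e w, h]
  · -- lower bound
    intro S J hS hI hdis hdom
    have hmem : ∀ (A : Set W) (x : V), x ∈ (⇑e.symm '' A) ↔ e x ∈ A := by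
      intro A x
      constructor
      · rintro ⟨w, hw, rfl⟩; rwa [RelIso.apply_symm_apply]
      · intro h; exact ⟨e x, h, by rw [RelIso.symm_apply_apply]⟩
    have hncard : ∀ A : Set W, (⇑e.symm '' A).ncard = A.ncard :=
      fun A => Set.ncard_image_of_injective A (EquivLike.injective e.symm)
    have hres := hG.lb (⇑e.symm '' S) (⇑e.symm '' J) ?_ ?_ ?_ ?_
    · rwa [hncard, hncard] at hres
    · intro x hx
      rw [hmem] at hx
      have := hS _ hx
      rwa [hdeg] at this
    · intro u hu v hv hG_adj
      rw [hmem] at hu hv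
      exact hI _ hu _ hv ((hadj u v).mpr hG_adj)
    · intro x hx hxS
      rw [hmem] at hx hxS
      exact hdis _ hx hxS
    · intro z hz1 hz2
      rw [hmem] at hz1 hz2
      obtain ⟨u, huJ, huadj⟩ := hdom (e z) hz1 hz2
      refine ⟨e.symm u, (hmem J _).mpr ?_, ?_⟩
      · rwa [RelIso.apply_symm_apply]
      · have h2 : H.Adj (e (e.symm u)) (e z) := by rwa [RelIso.apply_symm_apply]
        exact (hadj _ _).mp h2
  · -- upper bound
    intro h1 v hv hdv
    have hmem : ∀ (A : Set V) (x : W), x ∈ (⇑e '' A) ↔ e.symm x ∈ A := by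
      intro A x
      constructor
      · rintro ⟨w, hw, rfl⟩; rwa [RelIso.symm_apply_apply]
      · intro h; exact ⟨e.symm x, h, by rw [RelIso.apply_symm_apply]⟩
    have hncard : ∀ A : Set V, (⇑e '' A).ncard = A.ncard :=
      fun A => Set.ncard_image_of_injective A (EquivLike.injective e)
    have hdegr : deg G r = 1 := by
      have := hdeg r
      rw [h1] at this
      exact this.symm
    have hv0 : e.symm v ≠ r := by
      intro h
      apply hv
      rw [← RelIso.apply_symm_apply e v, h]
    have hdv0 : deg G (e.symm v) ≤ 2 := by rwa [hdeg'] at hdv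
    obtain ⟨J, hIJ, hrJ, hvJ, hdomJ, hcard⟩ := hG.ub hdegr (e.symm v) hv0 hdv0
    refine ⟨⇑e '' J, ?_, ?_, ?_, ?_, ?_⟩
    · intro u hu w hw huw
      rw [hmem] at hu hw
      apply hIJ _ hu _ hw
      have h2 : H.Adj (e (e.symm u)) (e (e.symm w)) := by
        rwa [RelIso.apply_symm_apply, RelIso.apply_symm_apply]
      exact (hadj _ _).mp h2
    · intro h
      rw [hmem, RelIso.symm_apply_apply] at h
      exact hrJ h
    · intro h
      rw [hmem] at h
      exact hvJ h
    · intro z hz1 hz2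
      rw [hmem] at hz2
      have hz1' : e.symm z ∉ ({r, e.symm v} : Set V) := by
        rintro (h | h)
        · apply hz1
          rw [← RelIso.apply_symm_apply e z, h]
          exact Set.mem_insert _ _
        · apply hz1
          rw [← RelIso.apply_symm_apply e z, h, RelIso.apply_symm_apply]
          exact Set.mem_insert_of_mem _ rfl
      obtain ⟨u, huJ, huadj⟩ := hdomJ (e.symm z) hz1' hz2
      refine ⟨e u, (hmem J _).mpr ?_, ?_⟩
      · rwa [RelIso.symm_apply_apply]
      · have h2 := (hadj u (e.symm z)).mpr huadj
        rwa [RelIso.apply_symm_apply] at h2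
    · rwa [hncard]

/-! ### The induction -/

lemma goodAt_of_family {V : Type} {B : SimpleGraph V} {r : V}
    (hroot : FamilyBRoot B r) : ∃ k : ℕ, GoodAt B r k := by
  induction hroot with
  | base => exact ⟨1, goodAt_base⟩
  | extend hG v' hv' t ih =>
    obtain ⟨k, hk⟩ := ih
    exact ⟨k + 1, goodAt_extend hk hv'⟩
  | iso e hG ih =>
    obtain ⟨k, hk⟩ := ih
    exact ⟨k, goodAt_iso e hk⟩


/-- Let `B ∈ 𝓑₁` have root `v₁` (of degree 1 in `B`), let `w₂ ≠ v₁`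
be a vertex of degree 2 in `B`, and let `T` be obtained from `B` by adding a new vertex
`v₂` and the two edges `v₁v₂` and `v₂w₂`. Then there exists an independent dominating set
of `T` of minimum cardinality `i(T)` containing the vertex `v₂`. -/
theorem statement15 {V : Type} (B : SimpleGraph V) (v1 : V) (hroot : FamilyBRoot B v1)
    (hdeg1 : deg B v1 = 1) (w2 : V) (hne : w2 ≠ v1) (hdeg2 : deg B w2 = 2)
    (T : SimpleGraph (V ⊕ Unit)) (hT : T = addLink B v1 w2) :
    ∃ I : Set (V ⊕ Unit), IsIDSet T I ∧ I.ncard = iNum T ∧ Sum.inr () ∈ I := by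
  subst hT
  obtain ⟨k, hk⟩ := goodAt_of_family hroot
  haveI := hk.fin
  -- the family of "A-sets": independent sets avoiding v1, w2 and dominating the rest
  set A : Set ℕ := {n | ∃ J : Set V, Indep B J ∧ v1 ∉ J ∧ w2 ∉ J ∧
    DomExcept B {v1, w2} J ∧ J.ncard = n} with hAdef
  have hAne : A.Nonempty := by
    obtain ⟨J, h1, h2, h3, h4, h5⟩ := hk.ub hdeg1 w2 hne (le_of_eq hdeg2)
    exact ⟨J.ncard, J, h1, h2, h3, h4, rfl⟩
  have hA2k : sInf A ≤ 2 * k := by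
    obtain ⟨J, h1, h2, h3, h4, h5⟩ := hk.ub hdeg1 w2 hne (le_of_eq hdeg2)
    exact le_trans (Nat.sInf_le ⟨J, h1, h2, h3, h4, rfl⟩) h5
  obtain ⟨J0, hJ0I, hJ0v1, hJ0w2, hJ0dom, hJ0card⟩ := Nat.sInf_mem hAne
  set I : Set (V ⊕ Unit) := Sum.inl '' J0 ∪ {Sum.inr ()} with hIdef
  have hrmem : Sum.inr () ∈ I := Or.inr rfl
  have hIcard : I.ncard = sInf A + 1 := by
    have hdisj : Disjoint (Sum.inl '' J0) ({Sum.inr ()} : Set (V ⊕ Unit)) := by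
      rw [Set.disjoint_left]
      rintro x ⟨y, -, rfl⟩ h
      exact absurd h (by simp)
    rw [hIdef, Set.ncard_union_eq hdisj (Set.toFinite _) (Set.toFinite _),
      Set.ncard_image_of_injective _ Sum.inl_injective, Set.ncard_singleton, hJ0card]
  have hIDS : IsIDSet (addLink B v1 w2) I := by
    constructor
    · -- independence
      rintro u (⟨x, hx, rfl⟩ | hu) w (⟨y, hy, rfl⟩ | hw)
      · intro hadj
        exact hJ0I x hx y hy (addLink_adj_inl_inl.mp hadj)
      · cases hw
        intro hadj
        rcases addLink_adj_inl_inr.mp hadj with rfl | rfl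
        · exact hJ0v1 hx
        · exact hJ0w2 hx
      · cases hu
        intro hadj
        rcases addLink_adj_inr_inl.mp hadj with rfl | rfl
        · exact hJ0v1 hy
        · exact hJ0w2 hy
      · cases hu; cases hw
        exact (addLink B v1 w2).loopless.irrefl _
    · -- domination
      intro z hz
      cases z with
      | inl b =>
        by_cases hb : b = v1 ∨ b = w2
        · refine ⟨Sum.inr (), hrmem, ?_⟩
          exact addLink_adj_inr_inl.mpr hb
        · push_neg at hb
          have hbJ : b ∉ J0 := fun h => hz (Or.inl ⟨b, h, rfl⟩)
          have hbS : b ∉ ({v1, w2} : Set V) := by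
            rintro (rfl | rfl)
            · exact hb.1 rfl
            · exact hb.2 rfl
          obtain ⟨u, hu, hadj⟩ := hJ0dom b hbS hbJ
          exact ⟨Sum.inl u, Or.inl ⟨u, hu, rfl⟩, addLink_adj_inl_inl.mpr hadj⟩
      | inr u =>
        cases u
        exact absurd hrmem hz
  refine ⟨I, hIDS, ?_, hrmem⟩
  -- I has minimum cardinality
  have hmemN : I.ncard ∈ {n | ∃ S : Set (V ⊕ Unit), IsIDSet (addLink B v1 w2) S ∧ S.ncard = n} :=
    ⟨I, hIDS, rfl⟩
  have hlow : ∀ n ∈ {n | ∃ S : Set (V ⊕ Unit), IsIDSet (addLink B v1 w2) S ∧ S.ncard = n},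
      I.ncard ≤ n := by
    rintro n ⟨K, ⟨hKI, hKdom⟩, rfl⟩
    set K0 : Set V := Sum.inl ⁻¹' K with hK0def
    by_cases hKr : Sum.inr () ∈ K
    · -- v2 ∈ K : K \ {v2} is an A-set
      have hKeq : K = Sum.inl '' K0 ∪ {Sum.inr ()} := by
        ext x
        cases x with
        | inl a =>
          constructor
          · intro h; exact Or.inl ⟨a, h, rfl⟩
          · rintro (⟨y, hy, hye⟩ | h)
            · cases hye; exact hy
            · exact absurd h (by simp)
        | inr u =>
          cases u
          constructor
          · intro _; exact Or.inr rfl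
          · intro _; exact hKr
      have hKcard : K.ncard = K0.ncard + 1 := by
        have hdisj : Disjoint (Sum.inl '' K0) ({Sum.inr ()} : Set (V ⊕ Unit)) := by
          rw [Set.disjoint_left]
          rintro x ⟨y, -, rfl⟩ h
          exact absurd h (by simp)
        conv_lhs => rw [hKeq]
        rw [Set.ncard_union_eq hdisj (Set.toFinite _) (Set.toFinite _),
          Set.ncard_image_of_injective _ Sum.inl_injective, Set.ncard_singleton]
      have hK0A : K0.ncard ∈ A := by
        refine ⟨K0, ?_, ?_, ?_, ?_, rfl⟩
        · intro u hu v hv hadj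
          exact hKI _ hu _ hv (addLink_adj_inl_inl.mpr hadj)
        · intro h
          exact hKI _ h _ hKr (addLink_adj_inl_inr.mpr (Or.inl rfl))
        · intro h
          exact hKI _ h _ hKr (addLink_adj_inl_inr.mpr (Or.inr rfl))
        · intro z hzS hzK
          obtain ⟨u, hu, hadj⟩ := hKdom (Sum.inl z) hzK
          cases u with
          | inl b => exact ⟨b, hu, addLink_adj_inl_inl.mp hadj⟩
          | inr w =>
            cases w
            exfalso
            rcases addLink_adj_inr_inl.mp hadj with rfl | rfl
            · exact hzS (Set.mem_insert _ _)
            · exact hzS (Set.mem_insert_of_mem _ rfl)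
      have := Nat.sInf_le hK0A
      omega
    · -- v2 ∉ K : K is an IDS of B, so it has at least 2k+1 elements
      have hKeq : K = Sum.inl '' K0 := by
        ext x
        cases x with
        | inl a =>
          constructor
          · intro h; exact ⟨a, h, rfl⟩
          · rintro ⟨y, hy, hye⟩; cases hye; exact hy
        | inr u =>
          cases u
          constructor
          · intro h; exact absurd h hKr
          · rintro ⟨y, hy, hye⟩; exact absurd hye (by simp)
      have hKcard : K.ncard = K0.ncard := by
        conv_lhs => rw [hKeq]
        rw [Set.ncard_image_of_injective _ Sum.inl_injective]
      have hlb := hk.lb ∅ K0 (by simp) ?_ (by simp) ?_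
      · rw [Set.ncard_empty] at hlb
        omega
      · intro u hu v hv hadj
        exact hKI _ hu _ hv (addLink_adj_inl_inl.mpr hadj)
      · intro z _ hzK
        obtain ⟨u, hu, hadj⟩ := hKdom (Sum.inl z) hzK
        cases u with
        | inl b => exact ⟨b, hu, addLink_adj_inl_inl.mp hadj⟩
        | inr w =>
          exfalso
          cases w
          exact hKr hu
  exact (le_antisymm (Nat.sInf_le hmemN) (hlow _ (Nat.sInf_mem ⟨_, hmemN⟩))).symm


end PaperIndepDom
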